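/- Let p, q > 1, μ > 0, α = (p+1)/(pq-1), β = (q+1)/(pq-1), Γ, γ > 0 with γ^p = αΓ, Γ^q = βγ, and b = (pq−1)(2pq+p+q)/(4pq(p+1)(q+1)(μ+1)). Then the functions Φ₀(z) = Γ(1 + b z²)^{−α} and Ψ₀(z) = γ(1 + b z²)^{−β} (z ∈ ℝ, z ≥ 0 suffices) satisfy the ODE system −(z/2)Φ₀'(z) − αΦ₀(z) + Ψ₀(z)^p = 0 and −(z/2)Ψ₀'(z) − βΨ₀(z) + Φ₀(z)^q = 0 for all z. -/

import Mathlib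

lemma aux_key (A B e f c b : ℝ) (hb : 0 < b) (hB : 0 ≤ B)
    (h1 : B ^ c = e * A) (hrel : f * c = e + 1)
    (F G : ℝ → ℝ)
    (hF : ∀ z, F z = A * (1 + b * z ^ 2) ^ (-e))
    (hG : ∀ z, G z = B * (1 + b * z ^ 2) ^ (-f)) (z : ℝ) :
    -(z / 2) * deriv F z - e * F z + G z ^ c = 0 := by
  have hu : 0 < 1 + b * z ^ 2 := by positivity
  set u : ℝ := 1 + b * z ^ 2 with hud
  have hinner : HasDerivAt (fun z : ℝ => 1 + b * z ^ 2) (2 * b * z) z := by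
    have := ((hasDerivAt_pow 2 z).const_mul b).const_add 1
    simpa [mul_comm, mul_assoc, mul_left_comm] using this
  have hrd : HasDerivAt F (A * ((2 * b * z) * (-e) * u ^ (-e - 1))) z := by
    have h := (hinner.rpow_const (p := -e) (Or.inl hu.ne'))
    have h2 := h.const_mul A
    have : HasDerivAt F (A * (2 * b * z * -e * (1 + b * z ^ 2) ^ (-e - 1))) z := by
      refine HasDerivAt.congr_of_eventuallyEq h2 ?_
      filter_upwards with x using (hF x)
    simpa [hud] using this
  have hderiv : deriv F z = A * ((2 * b * z) * (-e) * u ^ (-e - 1)) := hrd.deriv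
  have hGc : G z ^ c = e * A * u ^ (-e - 1) := by
    rw [hG z, ← hud, Real.mul_rpow hB (le_of_lt (Real.rpow_pos_of_pos hu _)),
      show ((u:ℝ) ^ (-f)) ^ c = u ^ (-f * c) from (Real.rpow_mul hu.le _ _).symm, h1, show -f * c = -e - 1 by linarith [hrel]]
  have husplit : u ^ (-e) = u ^ (-e - 1) * u := by
    rw [← Real.rpow_add_one hu.ne']
    ring_nf
  rw [hderiv, hF z, ← hud, hGc, husplit, hud]
  ring

theorem stmt_4 (p q μ α β Γ γ b : ℝ) (hp : 1 < p) (hq : 1 < q) (hμ : 0 < μ)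
    (hα : α = (p + 1) / (p * q - 1)) (hβ : β = (q + 1) / (p * q - 1))
    (hΓ : 0 < Γ) (hγ : 0 < γ) (h1 : γ ^ p = α * Γ) (h2 : Γ ^ q = β * γ)
    (hb : b = (p * q - 1) * (2 * p * q + p + q) /
      (4 * p * q * (p + 1) * (q + 1) * (μ + 1)))
    (Φ₀ Ψ₀ : ℝ → ℝ)
    (hΦ₀ : ∀ z, Φ₀ z = Γ * (1 + b * z ^ 2) ^ (-α))
    (hΨ₀ : ∀ z, Ψ₀ z = γ * (1 + b * z ^ 2) ^ (-β)) :
    ∀ z : ℝ, -(z / 2) * deriv Φ₀ z - α * Φ₀ z + Ψ₀ z ^ p = 0 ∧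
      -(z / 2) * deriv Ψ₀ z - β * Ψ₀ z + Φ₀ z ^ q = 0 := by
  have hpq : 0 < p * q - 1 := by nlinarith
  have hb0 : 0 < b := by
    rw [hb]
    have h2pq : 0 < 2 * p * q + p + q := by nlinarith
    have hd : 0 < 4 * p * q * (p + 1) * (q + 1) * (μ + 1) := by positivity
    positivity
  have hrel1 : β * p = α + 1 := by
    rw [hα, hβ]; rw [div_mul_eq_mul_div, div_add_one hpq.ne']; ring
  have hrel2 : α * q = β + 1 := by
    rw [hα, hβ]; field_simp; ring
  intro z
  exact ⟨aux_key Γ γ α β p b hb0 hγ.le h1 hrel1 Φ₀ Ψ₀ hΦ₀ hΨ₀ z,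
         aux_key γ Γ β α q b hb0 hΓ.le h2 hrel2 Ψ₀ Φ₀ hΨ₀ hΦ₀ z⟩
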